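/- arXiv:math/0007163 — 2 statements merged into one kernel-verified Lean document; each statement's English description precedes it below -/
import Mathlib

section
/- Let E₈³ be the lattice of vectors (m₁,m₂,m₃,m₄) with either all mᵢ ∈ ℤ or all mᵢ ∈ ℤ+1/2, and Σmᵢ even, with norm m₁²+m₂²+3m₃²+3m₄². Then every norm-6 vector of E₈³ lies in 3(E₈³)', where (E₈³)' is the dual lattice; consequently the roots of E₈³ are exactly its vectors of norm 2 and norm 6. -/
/-- The lattice `E₈³`: vectors `(m₁,m₂,m₃,m₄)` with all `mᵢ ∈ ℤ` or all `mᵢ ∈ ℤ+1/2`,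
and `Σ mᵢ` even. -/
def E83 : Set (Fin 4 → ℚ) :=
  {v | ((∀ i, ∃ k : ℤ, v i = k) ∨ (∀ i, ∃ k : ℤ, v i = k + 1 / 2)) ∧
    ∃ s : ℤ, v 0 + v 1 + v 2 + v 3 = 2 * s}

/-- The bilinear form of `E₈³`, with norm `m₁²+m₂²+3m₃²+3m₄²`. -/
def B83 (v w : Fin 4 → ℚ) : ℚ :=
  v 0 * w 0 + v 1 * w 1 + 3 * (v 2 * w 2) + 3 * (v 3 * w 3)

/-- The quadratic form (norm) of `E₈³`. -/
def Q83 (v : Fin 4 → ℚ) : ℚ := B83 v v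

/-- The dual lattice `(E₈³)'`. -/
def dual83 : Set (Fin 4 → ℚ) := {w | ∀ v ∈ E83, ∃ k : ℤ, B83 v w = k}

/-- A root of `E₈³`: a primitive vector whose reflection preserves the lattice. -/
def IsRoot83 (v : Fin 4 → ℚ) : Prop :=
  v ∈ E83 ∧ v ≠ 0 ∧
    (∀ (k : ℤ) (w : Fin 4 → ℚ), w ∈ E83 → v = (k : ℚ) • w → k = 1 ∨ k = -1) ∧
    ∀ x ∈ E83, x - (2 * B83 x v / Q83 v) • v ∈ E83


-- group structure
lemma E83_zero : (0 : Fin 4 → ℚ) ∈ E83 :=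
  ⟨Or.inl fun _ => ⟨0, by simp⟩, 0, by simp⟩

lemma E83_add {v w : Fin 4 → ℚ} (hv : v ∈ E83) (hw : w ∈ E83) : v + w ∈ E83 := by
  obtain ⟨hv1, s, hs⟩ := hv
  obtain ⟨hw1, t, ht⟩ := hw
  refine ⟨?_, s + t, by simp only [Pi.add_apply]; push_cast; linarith⟩
  rcases hv1 with hv1 | hv1 <;> rcases hw1 with hw1 | hw1
  · exact Or.inl fun i => by
      obtain ⟨a, ha⟩ := hv1 i; obtain ⟨b, hb⟩ := hw1 i
      exact ⟨a + b, by rw [Pi.add_apply, ha, hb]; push_cast; ring⟩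
  · exact Or.inr fun i => by
      obtain ⟨a, ha⟩ := hv1 i; obtain ⟨b, hb⟩ := hw1 i
      exact ⟨a + b, by rw [Pi.add_apply, ha, hb]; push_cast; ring⟩
  · exact Or.inr fun i => by
      obtain ⟨a, ha⟩ := hv1 i; obtain ⟨b, hb⟩ := hw1 i
      exact ⟨a + b, by rw [Pi.add_apply, ha, hb]; push_cast; ring⟩
  · exact Or.inl fun i => by
      obtain ⟨a, ha⟩ := hv1 i; obtain ⟨b, hb⟩ := hw1 i
      exact ⟨a + b + 1, by rw [Pi.add_apply, ha, hb]; push_cast; ring⟩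

lemma E83_neg {v : Fin 4 → ℚ} (hv : v ∈ E83) : -v ∈ E83 := by
  obtain ⟨hv1, s, hs⟩ := hv
  refine ⟨?_, -s, by simp only [Pi.neg_apply]; push_cast; linarith⟩
  rcases hv1 with hv1 | hv1
  · exact Or.inl fun i => by
      obtain ⟨a, ha⟩ := hv1 i
      exact ⟨-a, by rw [Pi.neg_apply, ha]; push_cast; ring⟩
  · exact Or.inr fun i => by
      obtain ⟨a, ha⟩ := hv1 i
      exact ⟨-a - 1, by rw [Pi.neg_apply, ha]; push_cast; ring⟩

lemma E83_sub {v w : Fin 4 → ℚ} (hv : v ∈ E83) (hw : w ∈ E83) : v - w ∈ E83 := by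
  rw [sub_eq_add_neg]; exact E83_add hv (E83_neg hw)

lemma E83_int_smul {v : Fin 4 → ℚ} (hv : v ∈ E83) (m : ℤ) : (m : ℚ) • v ∈ E83 := by
  obtain ⟨hv1, s, hs⟩ := hv
  refine ⟨?_, m * s, by
    simp only [Pi.smul_apply, smul_eq_mul]; push_cast; linear_combination (m:ℚ) * hs⟩
  rcases hv1 with hv1 | hv1
  · exact Or.inl fun i => by
      obtain ⟨a, ha⟩ := hv1 i
      exact ⟨m * a, by rw [Pi.smul_apply, smul_eq_mul, ha]; push_cast; ring⟩
  · rcases Int.even_or_odd m with ⟨t, hm⟩ | ⟨t, hm⟩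
    · exact Or.inl fun i => by
        obtain ⟨a, ha⟩ := hv1 i
        exact ⟨2 * t * a + t, by rw [Pi.smul_apply, smul_eq_mul, ha, hm]; push_cast; ring⟩
    · exact Or.inr fun i => by
        obtain ⟨a, ha⟩ := hv1 i
        exact ⟨m * a + t, by rw [Pi.smul_apply, smul_eq_mul, ha, hm]; push_cast; ring⟩

-- coordinates in (1/2)ℤ
lemma E83_half {v : Fin 4 → ℚ} (hv : v ∈ E83) (i : Fin 4) : ∃ a : ℤ, 2 * v i = a := by
  rcases hv.1 with h | h
  · obtain ⟨a, ha⟩ := h i; exact ⟨2 * a, by rw [ha]; push_cast; ring⟩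
  · obtain ⟨a, ha⟩ := h i; exact ⟨2 * a + 1, by rw [ha]; push_cast; ring⟩

-- even norm
lemma Q83_even {v : Fin 4 → ℚ} (hv : v ∈ E83) : ∃ n : ℤ, Q83 v = 2 * n := by
  obtain ⟨hv1, s, hs⟩ := hv
  rcases hv1 with h | h
  · obtain ⟨k1, h1⟩ := h 0; obtain ⟨k2, h2⟩ := h 1
    obtain ⟨k3, h3⟩ := h 2; obtain ⟨k4, h4⟩ := h 3
    refine ⟨2*s*s - (k1*k2+k1*k3+k1*k4+k2*k3+k2*k4+k3*k4) + k3*k3 + k4*k4, ?_⟩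
    rw [Q83, B83, h1, h2, h3, h4]
    rw [h1, h2, h3, h4] at hs
    push_cast
    linear_combination (↑k1 + ↑k2 + ↑k3 + ↑k4 + 2*(s:ℚ)) * hs
  · obtain ⟨k1, h1⟩ := h 0; obtain ⟨k2, h2⟩ := h 1
    obtain ⟨k3, h3⟩ := h 2; obtain ⟨k4, h4⟩ := h 3
    obtain ⟨t1, e1⟩ := Int.even_mul_succ_self k1
    obtain ⟨t2, e2⟩ := Int.even_mul_succ_self k2
    obtain ⟨t3, e3⟩ := Int.even_mul_succ_self k3
    obtain ⟨t4, e4⟩ := Int.even_mul_succ_self k4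
    refine ⟨t1 + t2 + 3*t3 + 3*t4 + 1, ?_⟩
    rw [Q83, B83, h1, h2, h3, h4]
    have c1 : (k1:ℚ) * (k1+1) = t1 + t1 := by exact_mod_cast congrArg (fun z : ℤ => (z : ℚ)) e1
    have c2 : (k2:ℚ) * (k2+1) = t2 + t2 := by exact_mod_cast congrArg (fun z : ℤ => (z : ℚ)) e2
    have c3 : (k3:ℚ) * (k3+1) = t3 + t3 := by exact_mod_cast congrArg (fun z : ℤ => (z : ℚ)) e3
    have c4 : (k4:ℚ) * (k4+1) = t4 + t4 := by exact_mod_cast congrArg (fun z : ℤ => (z : ℚ)) e4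
    push_cast
    linear_combination c1 + c2 + 3*c3 + 3*c4

-- B83 integer valued
lemma B83_int {v w : Fin 4 → ℚ} (hv : v ∈ E83) (hw : w ∈ E83) : ∃ b : ℤ, B83 v w = b := by
  obtain ⟨n, hn⟩ := Q83_even (E83_add hv hw)
  obtain ⟨p, hp⟩ := Q83_even hv
  obtain ⟨q, hq⟩ := Q83_even hw
  refine ⟨n - p - q, ?_⟩
  have key : Q83 (v + w) = Q83 v + Q83 w + 2 * B83 v w := by
    simp only [Q83, B83, Pi.add_apply]; ring
  rw [hn, hp, hq] at key
  push_cast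
  linarith

/-- The group of rational multiples of `v` landing in `E83`, rescaled to `ℤ` via a nonzero
coordinate. -/
def coefGroup (v : Fin 4 → ℚ) (a : ℚ) : AddSubgroup ℤ where
  carrier := {n : ℤ | ((n : ℚ) / a) • v ∈ E83}
  zero_mem' := by simpa using E83_zero
  add_mem' := by
    intro x y hx hy
    have : (((x + y : ℤ) : ℚ) / a) • v = ((x : ℚ)/a) • v + ((y : ℚ)/a) • v := by
      rw [← add_smul]; push_cast; ring_nf
    rw [Set.mem_setOf_eq, this]
    exact E83_add hx hy
  neg_mem' := by
    intro x hx
    have : (((-x : ℤ) : ℚ) / a) • v = -(((x : ℚ)/a) • v) := by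
      rw [← neg_smul]; push_cast; ring_nf
    rw [Set.mem_setOf_eq, this]
    exact E83_neg hx

lemma lemmaP {v : Fin 4 → ℚ} (hv : v ∈ E83) (hne : v ≠ 0)
    (hprim : ∀ (k : ℤ) (w : Fin 4 → ℚ), w ∈ E83 → v = (k : ℚ) • w → k = 1 ∨ k = -1)
    {c : ℚ} (hc : c • v ∈ E83) : ∃ m : ℤ, c = m := by
  -- find a nonzero coordinate
  obtain ⟨i, hi⟩ : ∃ i, v i ≠ 0 := by
    by_contra h
    push_neg at h
    exact hne (funext h)
  obtain ⟨a, ha⟩ := E83_half hv i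
  have ha0 : (a : ℚ) ≠ 0 := by
    rw [← ha]; intro h
    exact hi (by linarith [mul_eq_zero.mp h])
  -- the integer b = c * a
  obtain ⟨b, hb⟩ := E83_half hc i
  rw [Pi.smul_apply, smul_eq_mul] at hb
  have hcb : c * a = b := by
    have : c * (2 * v i) = b := by linarith
    rw [ha] at this; exact this
  obtain ⟨g, hg⟩ := Int.subgroup_cyclic (coefGroup v (a : ℚ))
  have haH : a ∈ coefGroup v (a : ℚ) := by
    show ((a : ℚ) / a) • v ∈ E83
    rw [div_self ha0, one_smul]; exact hv
  have hbH : b ∈ coefGroup v (a : ℚ) := by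
    show ((b : ℚ) / a) • v ∈ E83
    have : ((b : ℚ) / a) • v = c • v := by
      rw [← hcb, mul_div_assoc, div_self ha0, mul_one]
    rw [this]; exact hc
  rw [hg, AddSubgroup.mem_closure_singleton] at haH hbH
  obtain ⟨n, hn⟩ := haH
  obtain ⟨m, hm⟩ := hbH
  rw [smul_eq_mul] at hn hm
  have hgH : g ∈ coefGroup v (a : ℚ) := by
    rw [hg]; exact AddSubgroup.mem_closure_singleton.mpr ⟨1, one_smul _ _⟩
  have hwE : ((g : ℚ) / a) • v ∈ E83 := hgH
  have hveq : v = (n : ℚ) • (((g : ℚ) / a) • v) := by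
    rw [smul_smul]
    have : (n : ℚ) * ((g : ℚ) / a) = 1 := by
      field_simp
      exact_mod_cast (by linarith [hn] : (n * g : ℤ) = a)
    rw [this, one_smul]
  rcases hprim n _ hwE hveq with h1 | h1
  · refine ⟨m, ?_⟩
    have hba : b = m * a := by
      have hga : g = a := by rw [h1] at hn; linarith
      rw [← hga]; exact hm.symm
    have hq : c * (a:ℚ) = (m:ℚ) * a := by
      rw [hcb]; exact_mod_cast congrArg (fun z : ℤ => (z : ℚ)) hba
    exact mul_right_cancel₀ ha0 hq
  · refine ⟨-m, ?_⟩
    have hba : b = -m * a := by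
      have hga : g = -a := by rw [h1] at hn; linarith
      rw [hga] at hm; linarith [hm]
    have hq : c * (a:ℚ) = ((-m : ℤ):ℚ) * a := by
      rw [hcb]; exact_mod_cast congrArg (fun z : ℤ => (z : ℚ)) hba
    exact mul_right_cancel₀ ha0 hq
lemma classify6_int (m1 m2 m3 m4 : ℤ)
    (h : m1*m1 + m2*m2 + 3*(m3*m3) + 3*(m4*m4) = 6) :
    m1 = 0 ∧ m2 = 0 ∧ (m3 = 1 ∨ m3 = -1) ∧ (m4 = 1 ∨ m4 = -1) := by
  have b1 : -2 ≤ m1 ∧ m1 ≤ 2 := by constructor <;> nlinarith [sq_nonneg m1, mul_self_nonneg m2, mul_self_nonneg m3, mul_self_nonneg m4]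
  have b2 : -2 ≤ m2 ∧ m2 ≤ 2 := by constructor <;> nlinarith [mul_self_nonneg m1, mul_self_nonneg m3, mul_self_nonneg m4]
  have b3 : -1 ≤ m3 ∧ m3 ≤ 1 := by constructor <;> nlinarith [mul_self_nonneg m1, mul_self_nonneg m2, mul_self_nonneg m4]
  have b4 : -1 ≤ m4 ∧ m4 ≤ 1 := by constructor <;> nlinarith [mul_self_nonneg m1, mul_self_nonneg m2, mul_self_nonneg m3]
  obtain ⟨b1l, b1r⟩ := b1; obtain ⟨b2l, b2r⟩ := b2
  obtain ⟨b3l, b3r⟩ := b3; obtain ⟨b4l, b4r⟩ := b4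
  interval_cases m1 <;> interval_cases m2 <;> interval_cases m3 <;> interval_cases m4 <;> omega

lemma classify6_half (k1 k2 k3 k4 : ℤ)
    (h : (2*k1+1)*(2*k1+1) + (2*k2+1)*(2*k2+1) + 3*((2*k3+1)*(2*k3+1)) + 3*((2*k4+1)*(2*k4+1)) = 24) :
    (2*k1+1 = 3 ∨ 2*k1+1 = -3) ∧ (2*k2+1 = 3 ∨ 2*k2+1 = -3) ∧
    (2*k3+1 = 1 ∨ 2*k3+1 = -1) ∧ (2*k4+1 = 1 ∨ 2*k4+1 = -1) := by
  have b1 : -2 ≤ k1 ∧ k1 ≤ 1 := by constructor <;> nlinarith [mul_self_nonneg (2*k2+1), mul_self_nonneg (2*k3+1), mul_self_nonneg (2*k4+1)]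
  have b2 : -2 ≤ k2 ∧ k2 ≤ 1 := by constructor <;> nlinarith [mul_self_nonneg (2*k1+1), mul_self_nonneg (2*k3+1), mul_self_nonneg (2*k4+1)]
  have b3 : -2 ≤ k3 ∧ k3 ≤ 1 := by constructor <;> nlinarith [mul_self_nonneg (2*k1+1), mul_self_nonneg (2*k2+1), mul_self_nonneg (2*k4+1)]
  have b4 : -2 ≤ k4 ∧ k4 ≤ 1 := by constructor <;> nlinarith [mul_self_nonneg (2*k1+1), mul_self_nonneg (2*k2+1), mul_self_nonneg (2*k3+1)]
  obtain ⟨b1l, b1r⟩ := b1; obtain ⟨b2l, b2r⟩ := b2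
  obtain ⟨b3l, b3r⟩ := b3; obtain ⟨b4l, b4r⟩ := b4
  interval_cases k1 <;> interval_cases k2 <;> interval_cases k3 <;> interval_cases k4 <;> omega

lemma dvd2_key (c3 c4 : ℤ) (e3 e4 : ℤ) (h3 : e3 = 1 ∨ e3 = -1) (h4 : e4 = 1 ∨ e4 = -1) :
    (2:ℤ) ∣ (2*c3+1)*e3 + (2*c4+1)*e4 := by
  rcases h3 with rfl | rfl <;> rcases h4 with rfl | rfl <;> omega

lemma dvd6_key (c1 c2 c3 c4 a1 a2 a3 a4 t : ℤ)
    (h1 : a1 = 3 ∨ a1 = -3) (h2 : a2 = 3 ∨ a2 = -3)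
    (h3 : a3 = 1 ∨ a3 = -1) (h4 : a4 = 1 ∨ a4 = -1)
    (hw : c1 + c2 + c3 + c4 = 2*t) :
    (6:ℤ) ∣ c1*a1 + c2*a2 + 3*(c3*a3) + 3*(c4*a4) := by
  rcases h1 with rfl | rfl <;> rcases h2 with rfl | rfl <;>
    rcases h3 with rfl | rfl <;> rcases h4 with rfl | rfl <;> omega

lemma dvd12_key (d1 d2 d3 d4 a1 a2 a3 a4 s t : ℤ)
    (h1 : a1 = 3 ∨ a1 = -3) (h2 : a2 = 3 ∨ a2 = -3)
    (h3 : a3 = 1 ∨ a3 = -1) (h4 : a4 = 1 ∨ a4 = -1)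
    (hv : a1 + a2 + a3 + a4 = 4*s)
    (hw : d1 + d2 + d3 + d4 = 4*t)
    (ho1 : Odd d1) (ho2 : Odd d2) (ho3 : Odd d3) (ho4 : Odd d4) :
    (12:ℤ) ∣ d1*a1 + d2*a2 + 3*(d3*a3) + 3*(d4*a4) := by
  obtain ⟨x1, hx1⟩ := ho1; obtain ⟨x2, hx2⟩ := ho2
  obtain ⟨x3, hx3⟩ := ho3; obtain ⟨x4, hx4⟩ := ho4
  rcases h1 with rfl | rfl <;> rcases h2 with rfl | rfl <;>
    rcases h3 with rfl | rfl <;> rcases h4 with rfl | rfl <;> omega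

lemma B83_dualForm (v w : Fin 4 → ℚ) :
    B83 w ((3:ℚ)⁻¹ • v) = (w 0 * v 0 + w 1 * v 1 + 3*(w 2 * v 2) + 3*(w 3 * v 3))/3 := by
  simp only [B83, Pi.smul_apply, smul_eq_mul]; ring

lemma part1 : ∀ v ∈ E83, Q83 v = 6 → (3 : ℚ)⁻¹ • v ∈ dual83 := by
  intro v hv h6 w hw
  rw [B83_dualForm]
  obtain ⟨hv1, s, hs⟩ := hv
  obtain ⟨hw1, t, ht⟩ := hw
  rcases hv1 with hV | hV
  · -- v integer
    obtain ⟨m1, e1⟩ := hV 0; obtain ⟨m2, e2⟩ := hV 1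
    obtain ⟨m3, e3⟩ := hV 2; obtain ⟨m4, e4⟩ := hV 3
    have hZ : m1*m1 + m2*m2 + 3*(m3*m3) + 3*(m4*m4) = 6 := by
      have : ((m1*m1 + m2*m2 + 3*(m3*m3) + 3*(m4*m4) : ℤ) : ℚ) = 6 := by
        rw [Q83, B83, e1, e2, e3, e4] at h6; push_cast; linarith
      exact_mod_cast this
    obtain ⟨hm1, hm2, hm3, hm4⟩ := classify6_int m1 m2 m3 m4 hZ
    subst hm1; subst hm2
    rcases hw1 with hW | hW
    · obtain ⟨c1, f1⟩ := hW 0; obtain ⟨c2, f2⟩ := hW 1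
      obtain ⟨c3, f3⟩ := hW 2; obtain ⟨c4, f4⟩ := hW 3
      refine ⟨c3*m3 + c4*m4, ?_⟩
      rw [e1, e2, e3, e4, f1, f2, f3, f4]; push_cast; ring
    · obtain ⟨c1, f1⟩ := hW 0; obtain ⟨c2, f2⟩ := hW 1
      obtain ⟨c3, f3⟩ := hW 2; obtain ⟨c4, f4⟩ := hW 3
      obtain ⟨k, hk⟩ := dvd2_key c3 c4 m3 m4 hm3 hm4
      refine ⟨k, ?_⟩
      rw [e1, e2, e3, e4, f1, f2, f3, f4]
      have hkq : ((2*c3+1)*m3 + (2*c4+1)*m4 : ℚ) = 2*(k:ℚ) := by exact_mod_cast congrArg (fun z : ℤ => (z:ℚ)) hk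
      push_cast at hkq ⊢
      linear_combination hkq / 2
  · -- v half-integer
    obtain ⟨m1, e1⟩ := hV 0; obtain ⟨m2, e2⟩ := hV 1
    obtain ⟨m3, e3⟩ := hV 2; obtain ⟨m4, e4⟩ := hV 3
    have hZ : (2*m1+1)*(2*m1+1) + (2*m2+1)*(2*m2+1) + 3*((2*m3+1)*(2*m3+1)) + 3*((2*m4+1)*(2*m4+1)) = 24 := by
      have : (((2*m1+1)*(2*m1+1) + (2*m2+1)*(2*m2+1) + 3*((2*m3+1)*(2*m3+1)) + 3*((2*m4+1)*(2*m4+1)) : ℤ) : ℚ) = 24 := by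
        rw [Q83, B83, e1, e2, e3, e4] at h6; push_cast; linarith
      exact_mod_cast this
    obtain ⟨hm1, hm2, hm3, hm4⟩ := classify6_half m1 m2 m3 m4 hZ
    have hvs : (2*m1+1) + (2*m2+1) + (2*m3+1) + (2*m4+1) = 4*s := by
      have : ((2*m1+1) + (2*m2+1) + (2*m3+1) + (2*m4+1) : ℚ) = 4*s := by
        rw [e1, e2, e3, e4] at hs; push_cast; linarith
      exact_mod_cast this
    rcases hw1 with hW | hW
    · obtain ⟨c1, f1⟩ := hW 0; obtain ⟨c2, f2⟩ := hW 1
      obtain ⟨c3, f3⟩ := hW 2; obtain ⟨c4, f4⟩ := hW 3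
      have hws : c1 + c2 + c3 + c4 = 2*t := by
        have : (c1 + c2 + c3 + c4 : ℚ) = 2*t := by
          rw [f1, f2, f3, f4] at ht; push_cast; linarith
        exact_mod_cast this
      obtain ⟨k, hk⟩ := dvd6_key c1 c2 c3 c4 _ _ _ _ t hm1 hm2 hm3 hm4 hws
      refine ⟨k, ?_⟩
      rw [e1, e2, e3, e4, f1, f2, f3, f4]
      have hkq : ((c1*(2*m1+1) + c2*(2*m2+1) + 3*(c3*(2*m3+1)) + 3*(c4*(2*m4+1)) : ℤ) : ℚ) = 6*(k:ℚ) := by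
        exact_mod_cast congrArg (fun z : ℤ => (z:ℚ)) hk
      push_cast at hkq ⊢
      linear_combination hkq / 6
    · obtain ⟨c1, f1⟩ := hW 0; obtain ⟨c2, f2⟩ := hW 1
      obtain ⟨c3, f3⟩ := hW 2; obtain ⟨c4, f4⟩ := hW 3
      have hws : (2*c1+1) + (2*c2+1) + (2*c3+1) + (2*c4+1) = 4*t := by
        have : ((2*c1+1) + (2*c2+1) + (2*c3+1) + (2*c4+1) : ℚ) = 4*t := by
          rw [f1, f2, f3, f4] at ht; push_cast; linarith
        exact_mod_cast this
      obtain ⟨k, hk⟩ := dvd12_key (2*c1+1) (2*c2+1) (2*c3+1) (2*c4+1) _ _ _ _ s t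
        hm1 hm2 hm3 hm4 hvs hws ⟨c1, by ring⟩ ⟨c2, by ring⟩ ⟨c3, by ring⟩ ⟨c4, by ring⟩
      refine ⟨k, ?_⟩
      rw [e1, e2, e3, e4, f1, f2, f3, f4]
      have hkq : (((2*c1+1)*(2*m1+1) + (2*c2+1)*(2*m2+1) + 3*((2*c3+1)*(2*m3+1)) + 3*((2*c4+1)*(2*m4+1)) : ℤ) : ℚ) = 12*(k:ℚ) := by
        exact_mod_cast congrArg (fun z : ℤ => (z:ℚ)) hk
      push_cast at hkq ⊢
      linear_combination hkq / 12

lemma Q83_smul (k : ℚ) (w : Fin 4 → ℚ) : Q83 (k • w) = k * k * Q83 w := by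
  simp only [Q83, B83, Pi.smul_apply, smul_eq_mul]; ring

lemma Q83_zero : Q83 (0 : Fin 4 → ℚ) = 0 := by
  simp [Q83, B83]

lemma backward {v : Fin 4 → ℚ} (hv : v ∈ E83) (hQ : Q83 v = 2 ∨ Q83 v = 6) : IsRoot83 v := by
  refine ⟨hv, ?_, ?_, ?_⟩
  · rintro rfl
    rw [Q83_zero] at hQ
    rcases hQ with h | h <;> norm_num at h
  · intro k w hw hvw
    obtain ⟨n, hn⟩ := Q83_even hw
    have hkq : Q83 v = (k:ℚ) * k * (2 * n) := by rw [hvw, Q83_smul, hn]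
    rcases hQ with h | h
    · have : k * k * n = 1 := by
        have : ((k * k * n : ℤ) : ℚ) = 1 := by push_cast; rw [h] at hkq; linarith
        exact_mod_cast this
      have : k ∣ 1 := Dvd.intro (k * n) (by linarith)
      rcases Int.isUnit_iff.mp (isUnit_of_dvd_one this) with h' | h'
      · exact Or.inl h'
      · exact Or.inr h'
    · have h3 : k * k * n = 3 := by
        have : ((k * k * n : ℤ) : ℚ) = 3 := by push_cast; rw [h] at hkq; linarith
        exact_mod_cast this
      have hdvd : k ∣ 3 := Dvd.intro (k * n) (by linarith)
      have hk0 : k ≠ 0 := by rintro rfl; simp at h3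
      have hb1 : k ≤ 3 := Int.le_of_dvd (by norm_num) hdvd
      have hb2 : -3 ≤ k := by
        have := Int.le_of_dvd (by norm_num : (0:ℤ) < 3) (neg_dvd.mpr hdvd)
        omega
      interval_cases k <;> omega
  · intro x hx
    rcases hQ with h | h
    · obtain ⟨b, hb⟩ := B83_int hx hv
      have hc : 2 * B83 x v / Q83 v = (b : ℚ) := by rw [h, hb]; ring
      rw [hc]
      exact E83_sub hx (E83_int_smul hv b)
    · obtain ⟨k, hk⟩ := part1 v hv h x hx
      rw [B83_dualForm] at hk
      have hc : 2 * B83 x v / Q83 v = (k : ℚ) := by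
        rw [h, ← hk]; simp only [B83]; ring
      rw [hc]
      exact E83_sub hx (E83_int_smul hv k)

lemma funext4 {f g : Fin 4 → ℚ} (h0 : f 0 = g 0) (h1 : f 1 = g 1) (h2 : f 2 = g 2)
    (h3 : f 3 = g 3) : f = g := by
  funext i; fin_cases i <;> assumption

lemma mem1 : (![1,1,0,0] : Fin 4 → ℚ) ∈ E83 := by
  refine ⟨Or.inl fun i => ?_, 1, by norm_num [Matrix.cons_val_two, Matrix.cons_val_three, Matrix.vecHead, Matrix.vecTail]⟩
  fin_cases i
  exacts [⟨1, by norm_num⟩, ⟨1, by norm_num⟩, ⟨0, by norm_num⟩, ⟨0, by norm_num⟩]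

lemma mem2 : (![1,-1,0,0] : Fin 4 → ℚ) ∈ E83 := by
  refine ⟨Or.inl fun i => ?_, 0, by norm_num [Matrix.cons_val_two, Matrix.cons_val_three, Matrix.vecHead, Matrix.vecTail]⟩
  fin_cases i
  exacts [⟨1, by norm_num⟩, ⟨-1, by norm_num⟩, ⟨0, by norm_num⟩, ⟨0, by norm_num⟩]

lemma mem3 : (![0,0,1,1] : Fin 4 → ℚ) ∈ E83 := by
  refine ⟨Or.inl fun i => ?_, 1, by norm_num [Matrix.cons_val_two, Matrix.cons_val_three, Matrix.vecHead, Matrix.vecTail]⟩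
  fin_cases i
  exacts [⟨0, by norm_num⟩, ⟨0, by norm_num⟩, ⟨1, by norm_num⟩, ⟨1, by norm_num⟩]

lemma mem4 : (![0,0,1,-1] : Fin 4 → ℚ) ∈ E83 := by
  refine ⟨Or.inl fun i => ?_, 0, by norm_num [Matrix.cons_val_two, Matrix.cons_val_three, Matrix.vecHead, Matrix.vecTail]⟩
  fin_cases i
  exacts [⟨0, by norm_num⟩, ⟨0, by norm_num⟩, ⟨1, by norm_num⟩, ⟨-1, by norm_num⟩]

lemma mem5 : (![1/2,1/2,1/2,1/2] : Fin 4 → ℚ) ∈ E83 := by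
  refine ⟨Or.inr fun i => ?_, 1, by norm_num [Matrix.cons_val_two, Matrix.cons_val_three, Matrix.vecHead, Matrix.vecTail]⟩
  fin_cases i <;> exact ⟨0, by norm_num⟩

lemma eval1 (v : Fin 4 → ℚ) : B83 ![1,1,0,0] v = v 0 + v 1 := by norm_num [B83, Matrix.cons_val_two, Matrix.cons_val_three, Matrix.vecHead, Matrix.vecTail]
lemma eval2 (v : Fin 4 → ℚ) : B83 ![1,-1,0,0] v = v 0 - v 1 := by norm_num [B83, Matrix.cons_val_two, Matrix.cons_val_three, Matrix.vecHead, Matrix.vecTail]; ring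
lemma eval3 (v : Fin 4 → ℚ) : B83 ![0,0,1,1] v = 3*v 2 + 3*v 3 := by norm_num [B83, Matrix.cons_val_two, Matrix.cons_val_three, Matrix.vecHead, Matrix.vecTail]
lemma eval4 (v : Fin 4 → ℚ) : B83 ![0,0,1,-1] v = 3*v 2 - 3*v 3 := by norm_num [B83, Matrix.cons_val_two, Matrix.cons_val_three, Matrix.vecHead, Matrix.vecTail]; ring
lemma eval5 (v : Fin 4 → ℚ) : B83 ![1/2,1/2,1/2,1/2] v = (v 0 + v 1 + 3*v 2 + 3*v 3)/2 := by
  norm_num [B83, Matrix.cons_val_two, Matrix.cons_val_three, Matrix.vecHead, Matrix.vecTail]; ring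


lemma kill2 (m1 m2 m3 m4 u1 u2 u3 u4 u5 : ℤ)
    (d1 : m1 + m2 = 2*u1) (d2 : m1 - m2 = 2*u2)
    (d3 : 3*m3 + 3*m4 = 2*u3) (d4 : 3*m3 - 3*m4 = 2*u4)
    (d5 : m1 + m2 + 3*m3 + 3*m4 = 2*(2*u5))
    (hQ : m1*m1 + m2*m2 + 3*(m3*m3) + 3*(m4*m4) = 4) : False := by
  have b1 : -2 ≤ m1 ∧ m1 ≤ 2 := by constructor <;> nlinarith [mul_self_nonneg m2, mul_self_nonneg m3, mul_self_nonneg m4]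
  have b2 : -2 ≤ m2 ∧ m2 ≤ 2 := by constructor <;> nlinarith [mul_self_nonneg m1, mul_self_nonneg m3, mul_self_nonneg m4]
  have b3 : -1 ≤ m3 ∧ m3 ≤ 1 := by constructor <;> nlinarith [mul_self_nonneg m1, mul_self_nonneg m2, mul_self_nonneg m4]
  have b4 : -1 ≤ m4 ∧ m4 ≤ 1 := by constructor <;> nlinarith [mul_self_nonneg m1, mul_self_nonneg m2, mul_self_nonneg m3]
  obtain ⟨b1l, b1r⟩ := b1; obtain ⟨b2l, b2r⟩ := b2
  obtain ⟨b3l, b3r⟩ := b3; obtain ⟨b4l, b4r⟩ := b4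
  interval_cases m1 <;> interval_cases m2 <;> interval_cases m3 <;> interval_cases m4 <;> omega

lemma kill4 (m1 m2 m3 m4 u1 u2 u3 u4 u5 : ℤ)
    (d1 : m1 + m2 = 4*u1) (d2 : m1 - m2 = 4*u2)
    (d3 : 3*m3 + 3*m4 = 4*u3) (d4 : 3*m3 - 3*m4 = 4*u4)
    (d5 : m1 + m2 + 3*m3 + 3*m4 = 2*(4*u5))
    (hQ : m1*m1 + m2*m2 + 3*(m3*m3) + 3*(m4*m4) = 8) :
    (m1 = 2 ∧ m2 = -2 ∧ m3 = 0 ∧ m4 = 0) ∨ (m1 = -2 ∧ m2 = 2 ∧ m3 = 0 ∧ m4 = 0) := by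
  have b1 : -2 ≤ m1 ∧ m1 ≤ 2 := by constructor <;> nlinarith [mul_self_nonneg m2, mul_self_nonneg m3, mul_self_nonneg m4]
  have b2 : -2 ≤ m2 ∧ m2 ≤ 2 := by constructor <;> nlinarith [mul_self_nonneg m1, mul_self_nonneg m3, mul_self_nonneg m4]
  have b3 : -1 ≤ m3 ∧ m3 ≤ 1 := by constructor <;> nlinarith [mul_self_nonneg m1, mul_self_nonneg m2, mul_self_nonneg m4]
  have b4 : -1 ≤ m4 ∧ m4 ≤ 1 := by constructor <;> nlinarith [mul_self_nonneg m1, mul_self_nonneg m2, mul_self_nonneg m3]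
  obtain ⟨b1l, b1r⟩ := b1; obtain ⟨b2l, b2r⟩ := b2
  obtain ⟨b3l, b3r⟩ := b3; obtain ⟨b4l, b4r⟩ := b4
  interval_cases m1 <;> interval_cases m2 <;> interval_cases m3 <;> interval_cases m4 <;> omega

lemma kill6 (m1 m2 m3 m4 u1 u2 u3 u4 u5 : ℤ)
    (d1 : m1 + m2 = 6*u1) (d2 : m1 - m2 = 6*u2)
    (d3 : 3*m3 + 3*m4 = 6*u3) (d4 : 3*m3 - 3*m4 = 6*u4)
    (d5 : m1 + m2 + 3*m3 + 3*m4 = 2*(6*u5))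
    (hQ : m1*m1 + m2*m2 + 3*(m3*m3) + 3*(m4*m4) = 12) : False := by
  have b1 : -3 ≤ m1 ∧ m1 ≤ 3 := by constructor <;> nlinarith [mul_self_nonneg m2, mul_self_nonneg m3, mul_self_nonneg m4]
  have b2 : -3 ≤ m2 ∧ m2 ≤ 3 := by constructor <;> nlinarith [mul_self_nonneg m1, mul_self_nonneg m3, mul_self_nonneg m4]
  have b3 : -2 ≤ m3 ∧ m3 ≤ 2 := by constructor <;> nlinarith [mul_self_nonneg m1, mul_self_nonneg m2, mul_self_nonneg m4]
  have b4 : -2 ≤ m4 ∧ m4 ≤ 2 := by constructor <;> nlinarith [mul_self_nonneg m1, mul_self_nonneg m2, mul_self_nonneg m3]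
  obtain ⟨b1l, b1r⟩ := b1; obtain ⟨b2l, b2r⟩ := b2
  obtain ⟨b3l, b3r⟩ := b3; obtain ⟨b4l, b4r⟩ := b4
  have hm1 : m1 = -3 ∨ m1 = 0 ∨ m1 = 3 := by omega
  have hm2 : m2 = -3 ∨ m2 = 0 ∨ m2 = 3 := by omega
  rcases hm1 with rfl | rfl | rfl <;> rcases hm2 with rfl | rfl | rfl <;>
    interval_cases m3 <;> interval_cases m4 <;> omega

lemma kill8 (m1 m2 m3 m4 u1 u2 u3 u4 u5 : ℤ)
    (d1 : m1 + m2 = 8*u1) (d2 : m1 - m2 = 8*u2)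
    (d3 : 3*m3 + 3*m4 = 8*u3) (d4 : 3*m3 - 3*m4 = 8*u4)
    (d5 : m1 + m2 + 3*m3 + 3*m4 = 2*(8*u5))
    (hQ : m1*m1 + m2*m2 + 3*(m3*m3) + 3*(m4*m4) = 16) : False := by
  have b1 : -4 ≤ m1 ∧ m1 ≤ 4 := by constructor <;> nlinarith [mul_self_nonneg m2, mul_self_nonneg m3, mul_self_nonneg m4]
  have b2 : -4 ≤ m2 ∧ m2 ≤ 4 := by constructor <;> nlinarith [mul_self_nonneg m1, mul_self_nonneg m3, mul_self_nonneg m4]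
  have b3 : -2 ≤ m3 ∧ m3 ≤ 2 := by constructor <;> nlinarith [mul_self_nonneg m1, mul_self_nonneg m2, mul_self_nonneg m4]
  have b4 : -2 ≤ m4 ∧ m4 ≤ 2 := by constructor <;> nlinarith [mul_self_nonneg m1, mul_self_nonneg m2, mul_self_nonneg m3]
  obtain ⟨b1l, b1r⟩ := b1; obtain ⟨b2l, b2r⟩ := b2
  obtain ⟨b3l, b3r⟩ := b3; obtain ⟨b4l, b4r⟩ := b4
  have hm1 : m1 = -4 ∨ m1 = 0 ∨ m1 = 4 := by omega
  have hm2 : m2 = -4 ∨ m2 = 0 ∨ m2 = 4 := by omega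
  have hm3 : m3 = 0 := by omega
  have hm4 : m4 = 0 := by omega
  subst hm3; subst hm4
  rcases hm1 with rfl | rfl | rfl <;> rcases hm2 with rfl | rfl | rfl <;> omega

lemma kill12 (m1 m2 m3 m4 u1 u2 u3 u4 u5 : ℤ)
    (d1 : m1 + m2 = 12*u1) (d2 : m1 - m2 = 12*u2)
    (d3 : 3*m3 + 3*m4 = 12*u3) (d4 : 3*m3 - 3*m4 = 12*u4)
    (d5 : m1 + m2 + 3*m3 + 3*m4 = 2*(12*u5))
    (hQ : m1*m1 + m2*m2 + 3*(m3*m3) + 3*(m4*m4) = 24) :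
    m1 = 0 ∧ m2 = 0 ∧ ((m3 = 2 ∧ m4 = -2) ∨ (m3 = -2 ∧ m4 = 2)) := by
  have b1 : -4 ≤ m1 ∧ m1 ≤ 4 := by constructor <;> nlinarith [mul_self_nonneg m2, mul_self_nonneg m3, mul_self_nonneg m4]
  have b2 : -4 ≤ m2 ∧ m2 ≤ 4 := by constructor <;> nlinarith [mul_self_nonneg m1, mul_self_nonneg m3, mul_self_nonneg m4]
  have b3 : -2 ≤ m3 ∧ m3 ≤ 2 := by constructor <;> nlinarith [mul_self_nonneg m1, mul_self_nonneg m2, mul_self_nonneg m4]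
  have b4 : -2 ≤ m4 ∧ m4 ≤ 2 := by constructor <;> nlinarith [mul_self_nonneg m1, mul_self_nonneg m2, mul_self_nonneg m3]
  obtain ⟨b1l, b1r⟩ := b1; obtain ⟨b2l, b2r⟩ := b2
  obtain ⟨b3l, b3r⟩ := b3; obtain ⟨b4l, b4r⟩ := b4
  have hm1 : m1 = 0 := by omega
  have hm2 : m2 = 0 := by omega
  subst hm1; subst hm2
  refine ⟨rfl, rfl, ?_⟩
  interval_cases m3 <;> interval_cases m4 <;> omega

lemma kill24 (m1 m2 m3 m4 u1 u2 u3 u4 u5 : ℤ)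
    (d1 : m1 + m2 = 24*u1) (d2 : m1 - m2 = 24*u2)
    (d3 : 3*m3 + 3*m4 = 24*u3) (d4 : 3*m3 - 3*m4 = 24*u4)
    (d5 : m1 + m2 + 3*m3 + 3*m4 = 2*(24*u5))
    (hQ : m1*m1 + m2*m2 + 3*(m3*m3) + 3*(m4*m4) = 48) : False := by
  have b1 : -6 ≤ m1 ∧ m1 ≤ 6 := by constructor <;> nlinarith [mul_self_nonneg m2, mul_self_nonneg m3, mul_self_nonneg m4]
  have b2 : -6 ≤ m2 ∧ m2 ≤ 6 := by constructor <;> nlinarith [mul_self_nonneg m1, mul_self_nonneg m3, mul_self_nonneg m4]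
  have b3 : -4 ≤ m3 ∧ m3 ≤ 4 := by constructor <;> nlinarith [mul_self_nonneg m1, mul_self_nonneg m2, mul_self_nonneg m4]
  have b4 : -4 ≤ m4 ∧ m4 ≤ 4 := by constructor <;> nlinarith [mul_self_nonneg m1, mul_self_nonneg m2, mul_self_nonneg m3]
  obtain ⟨b1l, b1r⟩ := b1; obtain ⟨b2l, b2r⟩ := b2
  obtain ⟨b3l, b3r⟩ := b3; obtain ⟨b4l, b4r⟩ := b4
  have hm1 : m1 = 0 := by omega
  have hm2 : m2 = 0 := by omega
  subst hm1; subst hm2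
  have hm3 : m3 = -4 ∨ m3 = 0 ∨ m3 = 4 := by omega
  have hm4 : m4 = -4 ∨ m4 = 0 ∨ m4 = 4 := by omega
  rcases hm3 with rfl | rfl | rfl <;> rcases hm4 with rfl | rfl | rfl <;> omega

lemma forward {v : Fin 4 → ℚ} (hv : v ∈ E83) (hne : v ≠ 0)
    (hprim : ∀ (k : ℤ) (w : Fin 4 → ℚ), w ∈ E83 → v = (k : ℚ) • w → k = 1 ∨ k = -1)
    (hrefl : ∀ x ∈ E83, x - (2 * B83 x v / Q83 v) • v ∈ E83) :
    Q83 v = 2 ∨ Q83 v = 6 := by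
  obtain ⟨n, hn⟩ := Q83_even hv
  have hQne : Q83 v ≠ 0 := by
    intro h0
    apply hne
    rw [Q83, B83] at h0
    have h00 : v 0 = 0 := by nlinarith [mul_self_nonneg (v 0), mul_self_nonneg (v 1), mul_self_nonneg (v 2), mul_self_nonneg (v 3)]
    have h01 : v 1 = 0 := by nlinarith [mul_self_nonneg (v 0), mul_self_nonneg (v 1), mul_self_nonneg (v 2), mul_self_nonneg (v 3)]
    have h02 : v 2 = 0 := by nlinarith [mul_self_nonneg (v 0), mul_self_nonneg (v 1), mul_self_nonneg (v 2), mul_self_nonneg (v 3)]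
    have h03 : v 3 = 0 := by nlinarith [mul_self_nonneg (v 0), mul_self_nonneg (v 1), mul_self_nonneg (v 2), mul_self_nonneg (v 3)]
    exact funext4 (by simp [h00]) (by simp [h01]) (by simp [h02]) (by simp [h03])
  have hQnn : 0 ≤ Q83 v := by
    rw [Q83, B83]
    nlinarith [mul_self_nonneg (v 0), mul_self_nonneg (v 1), mul_self_nonneg (v 2), mul_self_nonneg (v 3)]
  have hn1 : 1 ≤ n := by
    by_contra h
    push_neg at h
    have : (n:ℚ) ≤ 0 := by exact_mod_cast Int.lt_add_one_iff.mp (by omega)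
    have : Q83 v ≤ 0 := by rw [hn]; linarith
    rcases lt_or_eq_of_le hQnn with h' | h'
    · linarith
    · exact hQne h'.symm
  have hn0 : n ≠ 0 := by omega
  have hcoef : ∀ x ∈ E83, ∃ m : ℤ, B83 x v = (n:ℚ) * m := by
    intro x hx
    have h1 := hrefl x hx
    have h2 : (2 * B83 x v / Q83 v) • v ∈ E83 := by
      have h3 := E83_sub hx h1
      rwa [sub_sub_cancel] at h3
    obtain ⟨m, hm⟩ := lemmaP hv hne hprim h2
    refine ⟨m, ?_⟩
    rw [div_eq_iff hQne, hn] at hm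
    linarith
  obtain ⟨u1, hu1⟩ := hcoef _ mem1
  obtain ⟨u2, hu2⟩ := hcoef _ mem2
  obtain ⟨u3, hu3⟩ := hcoef _ mem3
  obtain ⟨u4, hu4⟩ := hcoef _ mem4
  obtain ⟨u5, hu5⟩ := hcoef _ mem5
  rw [eval1] at hu1
  rw [eval2] at hu2
  rw [eval3] at hu3
  rw [eval4] at hu4
  rw [eval5] at hu5
  suffices hgoal : n = 1 ∨ n = 3 by
    rcases hgoal with h | h <;> rw [hn, h] <;> [left; right] <;> norm_num
  obtain ⟨hv1, s, hs⟩ := hv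
  rcases hv1 with hV | hV
  · -- integer coordinates
    obtain ⟨m1, E0⟩ := hV 0; obtain ⟨m2, E1⟩ := hV 1
    obtain ⟨m3, E2⟩ := hV 2; obtain ⟨m4, E3⟩ := hV 3
    rw [E0, E1] at hu1 hu2
    rw [E2, E3] at hu3 hu4
    rw [E0, E1, E2, E3] at hu5
    have d1 : m1 + m2 = n * u1 := by exact_mod_cast hu1
    have d2 : m1 - m2 = n * u2 := by exact_mod_cast hu2
    have d3 : 3*m3 + 3*m4 = n * u3 := by exact_mod_cast hu3
    have d4 : 3*m3 - 3*m4 = n * u4 := by exact_mod_cast hu4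
    have d5 : m1 + m2 + 3*m3 + 3*m4 = 2*(n * u5) := by
      have : ((m1 + m2 + 3*m3 + 3*m4 : ℤ) : ℚ) = ((2*(n*u5) : ℤ) : ℚ) := by
        push_cast
        linarith
      exact_mod_cast this
    have hQZ : m1*m1 + m2*m2 + 3*(m3*m3) + 3*(m4*m4) = 2*n := by
      rw [Q83, B83, E0, E1, E2, E3] at hn
      have : ((m1*m1 + m2*m2 + 3*(m3*m3) + 3*(m4*m4) : ℤ) : ℚ) = ((2*n : ℤ) : ℚ) := by
        push_cast
        linarith
      exact_mod_cast this
    have h2m1 : 2*m1 = n*(u1+u2) := by linear_combination d1 + d2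
    have h2m2 : 2*m2 = n*(u1-u2) := by linear_combination d1 - d2
    have h6m3 : 6*m3 = n*(u3+u4) := by linear_combination d3 + d4
    have h6m4 : 6*m4 = n*(u3-u4) := by linear_combination d3 - d4
    have sq1 := congrArg (fun z : ℤ => z*z) h2m1
    have sq2 := congrArg (fun z : ℤ => z*z) h2m2
    have sq3 := congrArg (fun z : ℤ => z*z) h6m3
    have sq4 := congrArg (fun z : ℤ => z*z) h6m4
    have hfin : n * 24 = n * (n * (3*((u1+u2)*(u1+u2)) + 3*((u1-u2)*(u1-u2)) + (u3+u4)*(u3+u4) + (u3-u4)*(u3-u4))) := by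
      linear_combination (-12)*hQZ + 3*sq1 + 3*sq2 + sq3 + sq4
    have h24 : 24 = n * (3*((u1+u2)*(u1+u2)) + 3*((u1-u2)*(u1-u2)) + (u3+u4)*(u3+u4) + (u3-u4)*(u3-u4)) :=
      mul_left_cancel₀ hn0 hfin
    have hdvd : n ∣ 24 := ⟨_, h24⟩
    clear hfin h24 sq1 sq2 sq3 sq4
    have hnlist : n = 1 ∨ n = 2 ∨ n = 3 ∨ n = 4 ∨ n = 6 ∨ n = 8 ∨ n = 12 ∨ n = 24 := by
      have hb : n ≤ 24 := Int.le_of_dvd (by norm_num) hdvd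
      interval_cases n <;> omega
    rcases hnlist with rfl | rfl | rfl | rfl | rfl | rfl | rfl | rfl
    · left; rfl
    · exact absurd (kill2 m1 m2 m3 m4 u1 u2 u3 u4 u5 d1 d2 d3 d4 d5 hQZ) (by simp)
    · right; rfl
    · -- n = 4
      exfalso
      rcases kill4 m1 m2 m3 m4 u1 u2 u3 u4 u5 d1 d2 d3 d4 d5 hQZ with
        ⟨hA, hB, hC, hD⟩ | ⟨hA, hB, hC, hD⟩
      · have hveq : v = ((2:ℤ):ℚ) • ![1,-1,0,0] := by
          refine funext4 ?_ ?_ ?_ ?_ <;>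
            simp [Pi.smul_apply, E0, E1, E2, E3, hA, hB, hC, hD]
        rcases hprim 2 _ mem2 hveq with h | h <;> norm_num at h
      · have hveq : v = ((-2:ℤ):ℚ) • ![1,-1,0,0] := by
          refine funext4 ?_ ?_ ?_ ?_ <;>
            simp [Pi.smul_apply, E0, E1, E2, E3, hA, hB, hC, hD]
        rcases hprim (-2) _ mem2 hveq with h | h <;> norm_num at h
    · exact absurd (kill6 m1 m2 m3 m4 u1 u2 u3 u4 u5 d1 d2 d3 d4 d5 hQZ) (by simp)
    · exact absurd (kill8 m1 m2 m3 m4 u1 u2 u3 u4 u5 d1 d2 d3 d4 d5 hQZ) (by simp)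
    · -- n = 12
      exfalso
      obtain ⟨hA, hB, hCD⟩ := kill12 m1 m2 m3 m4 u1 u2 u3 u4 u5 d1 d2 d3 d4 d5 hQZ
      rcases hCD with ⟨hC, hD⟩ | ⟨hC, hD⟩
      · have hveq : v = ((2:ℤ):ℚ) • ![0,0,1,-1] := by
          refine funext4 ?_ ?_ ?_ ?_ <;>
            simp [Pi.smul_apply, E0, E1, E2, E3, hA, hB, hC, hD]
        rcases hprim 2 _ mem4 hveq with h | h <;> norm_num at h
      · have hveq : v = ((-2:ℤ):ℚ) • ![0,0,1,-1] := by
          refine funext4 ?_ ?_ ?_ ?_ <;>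
            simp [Pi.smul_apply, E0, E1, E2, E3, hA, hB, hC, hD]
        rcases hprim (-2) _ mem4 hveq with h | h <;> norm_num at h
    · exact absurd (kill24 m1 m2 m3 m4 u1 u2 u3 u4 u5 d1 d2 d3 d4 d5 hQZ) (by simp)
  · -- half-integer coordinates
    obtain ⟨m1, E0⟩ := hV 0; obtain ⟨m2, E1⟩ := hV 1
    obtain ⟨m3, E2⟩ := hV 2; obtain ⟨m4, E3⟩ := hV 3
    rw [E0, E1] at hu1 hu2
    rw [E2, E3] at hu3 hu4
    have d1 : (2*m1+1) + (2*m2+1) = 2*(n * u1) := by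
      have : (((2*m1+1) + (2*m2+1) : ℤ) : ℚ) = ((2*(n*u1) : ℤ) : ℚ) := by push_cast; linarith
      exact_mod_cast this
    have d2 : (2*m1+1) - (2*m2+1) = 2*(n * u2) := by
      have : (((2*m1+1) - (2*m2+1) : ℤ) : ℚ) = ((2*(n*u2) : ℤ) : ℚ) := by push_cast; linarith
      exact_mod_cast this
    have d3 : 3*(2*m3+1) + 3*(2*m4+1) = 2*(n * u3) := by
      have : ((3*(2*m3+1) + 3*(2*m4+1) : ℤ) : ℚ) = ((2*(n*u3) : ℤ) : ℚ) := by push_cast; linarith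
      exact_mod_cast this
    have d4 : 3*(2*m3+1) - 3*(2*m4+1) = 2*(n * u4) := by
      have : ((3*(2*m3+1) - 3*(2*m4+1) : ℤ) : ℚ) = ((2*(n*u4) : ℤ) : ℚ) := by push_cast; linarith
      exact_mod_cast this
    have hQZ : (2*m1+1)*(2*m1+1) + (2*m2+1)*(2*m2+1) + 3*((2*m3+1)*(2*m3+1)) + 3*((2*m4+1)*(2*m4+1)) = 8*n := by
      rw [Q83, B83, E0, E1, E2, E3] at hn
      have : (((2*m1+1)*(2*m1+1) + (2*m2+1)*(2*m2+1) + 3*((2*m3+1)*(2*m3+1)) + 3*((2*m4+1)*(2*m4+1)) : ℤ) : ℚ) = ((8*n : ℤ) : ℚ) := by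
        push_cast
        linarith
      exact_mod_cast this
    have ha1 : 2*m1+1 = n*(u1+u2) := mul_left_cancel₀ two_ne_zero (by linear_combination d1 + d2)
    have ha2 : 2*m2+1 = n*(u1-u2) := mul_left_cancel₀ two_ne_zero (by linear_combination d1 - d2)
    have ha3 : 3*(2*m3+1) = n*(u3+u4) := mul_left_cancel₀ two_ne_zero (by linear_combination d3 + d4)
    have ha4 : 3*(2*m4+1) = n*(u3-u4) := mul_left_cancel₀ two_ne_zero (by linear_combination d3 - d4)
    have sq1 := congrArg (fun z : ℤ => z*z) ha1
    have sq2 := congrArg (fun z : ℤ => z*z) ha2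
    have sq3 := congrArg (fun z : ℤ => z*z) ha3
    have sq4 := congrArg (fun z : ℤ => z*z) ha4
    have hfin : n * 24 = n * (n * (3*((u1+u2)*(u1+u2)) + 3*((u1-u2)*(u1-u2)) + (u3+u4)*(u3+u4) + (u3-u4)*(u3-u4))) := by
      linear_combination (-3)*hQZ + 3*sq1 + 3*sq2 + sq3 + sq4
    have h24 : 24 = n * (3*((u1+u2)*(u1+u2)) + 3*((u1-u2)*(u1-u2)) + (u3+u4)*(u3+u4) + (u3-u4)*(u3-u4)) :=
      mul_left_cancel₀ hn0 hfin
    have hdvd : n ∣ 24 := ⟨_, h24⟩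
    clear hfin h24 sq1 sq2 sq3 sq4
    have hnlist : n = 1 ∨ n = 2 ∨ n = 3 ∨ n = 4 ∨ n = 6 ∨ n = 8 ∨ n = 12 ∨ n = 24 := by
      have hb : n ≤ 24 := Int.le_of_dvd (by norm_num) hdvd
      interval_cases n <;> omega
    rcases hnlist with rfl | rfl | rfl | rfl | rfl | rfl | rfl | rfl
    · left; rfl
    · exfalso; omega
    · right; rfl
    all_goals exfalso; omega

/-- Every norm-6 vector of `E₈³` lies in `3(E₈³)'`, and the roots of `E₈³` are exactly its
vectors of norm `2` and norm `6`. -/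
theorem stmt10 :
    (∀ v ∈ E83, Q83 v = 6 → (3 : ℚ)⁻¹ • v ∈ dual83) ∧
    ∀ v : Fin 4 → ℚ, IsRoot83 v ↔ v ∈ E83 ∧ (Q83 v = 2 ∨ Q83 v = 6) := by
  refine ⟨part1, fun v => ⟨fun h => ⟨h.1, forward h.1 h.2.1 h.2.2.1 h.2.2.2⟩,
    fun h => backward h.1 h.2⟩⟩
end

section
/- In the Lorentzian lattice L = E₈⁷(-1) ⊕ II_{1,1}, the six vectors α₁=((1/2,1/2),0,0), α₂=((7/2,-1/2),0,0), α₃=((0,0),1,1), α₄=((-1/2,-1/2),0,-1), α₅=((-2,0),1,-1), α₆=((-7/2,1/2),0,-7) are roots of L, with α₂,α₆ of norm -14 and the rest of norm -2, and each satisfies (ρ,αᵢ) = αᵢ²/2 for ρ = ((2,0),-2,3). Moreover ρ² = 8. -/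
/-- The lattice `E₈⁷`: pairs `(m₁,m₂)` with `m₁,m₂ ∈ ℤ` and `m₁+m₂` even, or
`m₁,m₂ ∈ ℤ+1/2` and `m₁+m₂` odd. -/
def E87 : Set (ℚ × ℚ) :=
  {v | ((∃ a : ℤ, v.1 = a) ∧ (∃ b : ℤ, v.2 = b) ∧ ∃ s : ℤ, v.1 + v.2 = 2 * s) ∨
    ((∃ a : ℤ, v.1 = a + 1 / 2) ∧ (∃ b : ℤ, v.2 = b + 1 / 2) ∧
      ∃ s : ℤ, v.1 + v.2 = 2 * s + 1)}

/-- The bilinear form of `E₈⁷`, with norm `m₁²+7m₂²`. -/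
def B87 (v w : ℚ × ℚ) : ℚ := v.1 * w.1 + 7 * (v.2 * w.2)

/-- The quadratic form (norm) of `E₈⁷`. -/
def Q87 (v : ℚ × ℚ) : ℚ := B87 v v

/-- The dual lattice `(E₈⁷)'`. -/
def dual87 : Set (ℚ × ℚ) := {w | ∀ v ∈ E87, ∃ k : ℤ, B87 v w = k}

/-- A root of `E₈⁷`: a primitive vector whose reflection preserves the lattice. -/
def IsRoot87 (v : ℚ × ℚ) : Prop :=
  v ∈ E87 ∧ v ≠ 0 ∧
    (∀ (k : ℤ) (w : ℚ × ℚ), w ∈ E87 → v = (k : ℚ) • w → k = 1 ∨ k = -1) ∧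
    ∀ x ∈ E87, x - (2 * B87 x v / Q87 v) • v ∈ E87

/-- The Lorentzian lattice `L = E₈⁷(-1) ⊕ II_{1,1}` inside `ℚ² × ℚ × ℚ`. -/
def L14 : Set ((ℚ × ℚ) × ℚ × ℚ) :=
  {x | x.1 ∈ E87 ∧ (∃ a : ℤ, x.2.1 = a) ∧ ∃ b : ℤ, x.2.2 = b}

/-- The bilinear form of `L = E₈⁷(-1) ⊕ II_{1,1}`: `(v,m,n)² = -v²_{E₈⁷} - 2mn`. -/
def BL14 (x y : (ℚ × ℚ) × ℚ × ℚ) : ℚ :=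
  -(B87 x.1 y.1) - (x.2.1 * y.2.2 + x.2.2 * y.2.1)

/-- A root of `L`: a primitive negative norm vector whose reflection preserves `L`. -/
def IsRootL14 (α : (ℚ × ℚ) × ℚ × ℚ) : Prop :=
  α ∈ L14 ∧ BL14 α α < 0 ∧
    (∀ (k : ℤ) (w : (ℚ × ℚ) × ℚ × ℚ), w ∈ L14 → α = (k : ℚ) • w → k = 1 ∨ k = -1) ∧
    ∀ x ∈ L14, x - (2 * BL14 x α / BL14 α α) • α ∈ L14

/-- The simple roots found by Vinberg's algorithm and the Weyl vector. -/
def b₁ : (ℚ × ℚ) × ℚ × ℚ := ((1/2, 1/2), 0, 0)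
def b₂ : (ℚ × ℚ) × ℚ × ℚ := ((7/2, -1/2), 0, 0)
def b₃ : (ℚ × ℚ) × ℚ × ℚ := ((0, 0), 1, 1)
def b₄ : (ℚ × ℚ) × ℚ × ℚ := ((-1/2, -1/2), 0, -1)
def b₅ : (ℚ × ℚ) × ℚ × ℚ := ((-2, 0), 1, -1)
def b₆ : (ℚ × ℚ) × ℚ × ℚ := ((-7/2, 1/2), 0, -7)
def ρ14 : (ℚ × ℚ) × ℚ × ℚ := ((2, 0), -2, 3)

lemma half_even {p q : ℤ} (h : q = 2*p) : (q:ℚ)/2 = p := by rw [h]; push_cast; ring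
lemma half_odd {p q : ℤ} (h : q = 2*p+1) : (q:ℚ)/2 = (p:ℚ) + 1/2 := by rw [h]; push_cast; ring

lemma mem_E87_iff (v : ℚ × ℚ) :
    v ∈ E87 ↔ ∃ a b : ℤ, v.1 = (a : ℚ)/2 ∧ v.2 = (b : ℚ)/2 ∧ a % 2 = b % 2 ∧
      (a + b) % 4 = 2 * (a % 2) := by
  constructor
  · rintro (⟨⟨a, ha⟩, ⟨b, hb⟩, ⟨s, hs⟩⟩ | ⟨⟨a, ha⟩, ⟨b, hb⟩, ⟨s, hs⟩⟩)
    · refine ⟨2*a, 2*b, by push_cast [ha]; ring, by push_cast [hb]; ring, ?_, ?_⟩ <;>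
      · have h : a + b = 2 * s := by
          have : (a : ℚ) + b = 2 * s := by rw [← ha, ← hb]; exact hs
          exact_mod_cast this
        omega
    · refine ⟨2*a+1, 2*b+1, by push_cast [ha]; ring, by push_cast [hb]; ring, ?_, ?_⟩ <;>
      · have h : a + b = 2 * s := by
          have : (a : ℚ) + b = 2 * s := by rw [ha, hb] at hs; linarith
          exact_mod_cast this
        omega
  · rintro ⟨a, b, ha, hb, h1, h2⟩
    rcases Int.even_or_odd a with ⟨c, hc⟩ | ⟨c, hc⟩
    · left
      refine ⟨⟨c, by rw [ha]; exact half_even (by omega)⟩,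
        ⟨b/2, by rw [hb]; exact half_even (by omega)⟩, (a+b)/4, ?_⟩
      rw [ha, hb]
      have : ((a:ℚ) + b) = 4 * ((a+b)/4 : ℤ) := by
        exact_mod_cast (show a + b = 4*((a+b)/4) by omega)
      linarith
    · right
      refine ⟨⟨c, by rw [ha]; exact half_odd (by omega)⟩,
        ⟨(b-1)/2, by rw [hb]; exact half_odd (by omega)⟩, (a+b-2)/4, ?_⟩
      rw [ha, hb]
      have : ((a:ℚ) + b) = 4 * ((a+b-2)/4 : ℤ) + 2 := by
        exact_mod_cast (show a + b = 4*((a+b-2)/4) + 2 by omega)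
      linarith

lemma E87_sub {v w : ℚ × ℚ} (hv : v ∈ E87) (hw : w ∈ E87) : v - w ∈ E87 := by
  rw [mem_E87_iff] at *
  obtain ⟨a, b, ha, hb, h1, h2⟩ := hv
  obtain ⟨c, d, hc, hd, h3, h4⟩ := hw
  refine ⟨a - c, b - d, ?_, ?_, by omega, by omega⟩ <;> push_cast <;>
    simp [Prod.fst_sub, Prod.snd_sub, ha, hb, hc, hd] <;> ring

lemma E87_add {v w : ℚ × ℚ} (hv : v ∈ E87) (hw : w ∈ E87) : v + w ∈ E87 := by
  rw [mem_E87_iff] at *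
  obtain ⟨a, b, ha, hb, h1, h2⟩ := hv
  obtain ⟨c, d, hc, hd, h3, h4⟩ := hw
  refine ⟨a + c, b + d, ?_, ?_, by omega, by omega⟩ <;> push_cast <;>
    simp [ha, hb, hc, hd] <;> ring

lemma L14_sub {x y : (ℚ × ℚ) × ℚ × ℚ} (hx : x ∈ L14) (hy : y ∈ L14) : x - y ∈ L14 := by
  obtain ⟨h1, ⟨a, ha⟩, ⟨b, hb⟩⟩ := hx
  obtain ⟨h2, ⟨c, hc⟩, ⟨d, hd⟩⟩ := hy
  exact ⟨E87_sub h1 h2, ⟨a - c, by simp [Prod.sub_def, ha, hc]⟩,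
    ⟨b - d, by simp [Prod.sub_def, hb, hd]⟩⟩

lemma L14_add {x y : (ℚ × ℚ) × ℚ × ℚ} (hx : x ∈ L14) (hy : y ∈ L14) : x + y ∈ L14 := by
  obtain ⟨h1, ⟨a, ha⟩, ⟨b, hb⟩⟩ := hx
  obtain ⟨h2, ⟨c, hc⟩, ⟨d, hd⟩⟩ := hy
  exact ⟨E87_add h1 h2, ⟨a + c, by simp [Prod.add_def, ha, hc]⟩,
    ⟨b + d, by simp [Prod.add_def, hb, hd]⟩⟩

lemma L14_sub_zsmul {x α : (ℚ × ℚ) × ℚ × ℚ} (hx : x ∈ L14) (hα : α ∈ L14) (k : ℤ) :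
    x - (k : ℚ) • α ∈ L14 := by
  induction k using Int.induction_on with
  | zero => simpa using hx
  | succ n ih =>
      have : x - ((n : ℤ) + 1 : ℚ) • α = (x - (n : ℚ) • α) - α := by push_cast; module
      rw [show (((n:ℤ) + 1 : ℤ) : ℚ) = ((n : ℤ) : ℚ) + 1 by push_cast; ring, this]
      exact L14_sub ih hα
  | pred n ih =>
      have : x - (-(n : ℚ) - 1) • α = (x - (-(n : ℚ)) • α) + α := by module
      rw [show ((-(n:ℤ) - 1 : ℤ) : ℚ) = -(n : ℚ) - 1 by push_cast; ring, this]
      have h2 : x - (-(n:ℚ)) • α = x - ((-(n:ℤ) : ℤ) : ℚ) • α := by push_cast; ring_nf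
      exact L14_add (by rw [h2] at *; exact ih) hα

lemma isRootL14_of (α : (ℚ × ℚ) × ℚ × ℚ) (hα : α ∈ L14) (hneg : BL14 α α < 0)
    (hprim : ∀ (k : ℤ) (w : (ℚ × ℚ) × ℚ × ℚ), w ∈ L14 → α = (k : ℚ) • w → k = 1 ∨ k = -1)
    (hint : ∀ x ∈ L14, ∃ k : ℤ, 2 * BL14 x α = k * BL14 α α) : IsRootL14 α := by
  refine ⟨hα, hneg, hprim, ?_⟩
  intro x hx
  obtain ⟨k, hk⟩ := hint x hx
  have h : 2 * BL14 x α / BL14 α α = (k : ℚ) := by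
    rw [div_eq_iff (ne_of_lt hneg)]; linarith
  rw [h]
  exact L14_sub_zsmul hx hα k

lemma prim_of_unit {k c : ℤ} (h : k * c = 1) : k = 1 ∨ k = -1 :=
  Int.isUnit_iff.mp (IsUnit.of_mul_eq_one _ h)

lemma root1 : IsRootL14 b₁ := by
  refine isRootL14_of _ ⟨?_, ⟨0, rfl⟩, ⟨0, rfl⟩⟩ (by norm_num [BL14, B87, b₁]) ?_ ?_
  · rw [mem_E87_iff]; exact ⟨1, 1, by norm_num [b₁], by norm_num [b₁], rfl, rfl⟩
  · intro k w hw h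
    obtain ⟨a, b, ha, hb, h1, h2⟩ := (mem_E87_iff w.1).mp hw.1
    have e1 : b₁.1.1 = (k:ℚ) * w.1.1 := by rw [h]; rfl
    rw [ha] at e1
    have : k * a = 1 := by
      have : (k:ℚ) * a = 1 := by simp only [b₁] at e1; field_simp at e1; linarith
      exact_mod_cast this
    exact prim_of_unit this
  · rintro x ⟨hx1, ⟨m, hm⟩, ⟨n, hn⟩⟩
    obtain ⟨a, b, ha, hb, h1, h2⟩ := (mem_E87_iff x.1).mp hx1
    refine ⟨(a + 7*b)/4, ?_⟩
    have key : (a:ℚ) + 7*b = 4 * (((a + 7*b)/4 : ℤ) : ℚ) := by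
      exact_mod_cast (show a + 7*b = 4 * ((a + 7*b)/4) by omega)
    simp only [BL14, B87, b₁, ha, hb, hm, hn]
    linarith

lemma root2 : IsRootL14 b₂ := by
  refine isRootL14_of _ ⟨?_, ⟨0, rfl⟩, ⟨0, rfl⟩⟩ (by norm_num [BL14, B87, b₂]) ?_ ?_
  · rw [mem_E87_iff]; exact ⟨7, -1, by norm_num [b₂], by norm_num [b₂], by decide, by decide⟩
  · intro k w hw h
    obtain ⟨a, b, ha, hb, h1, h2⟩ := (mem_E87_iff w.1).mp hw.1
    have e1 : b₂.1.2 = (k:ℚ) * w.1.2 := by rw [h]; rfl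
    rw [hb] at e1
    have hkb : k * b = -1 := by
      have : (k:ℚ) * b = -1 := by simp only [b₂] at e1; field_simp at e1; linarith
      exact_mod_cast this
    exact prim_of_unit (show k * (-b) = 1 by rw [mul_neg, hkb]; ring)
  · rintro x ⟨hx1, ⟨m, hm⟩, ⟨n, hn⟩⟩
    obtain ⟨a, b, ha, hb, h1, h2⟩ := (mem_E87_iff x.1).mp hx1
    refine ⟨(a - b)/4, ?_⟩
    have key : (a:ℚ) - b = 4 * (((a - b)/4 : ℤ) : ℚ) := by
      exact_mod_cast (show a - b = 4 * ((a - b)/4) by omega)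
    simp only [BL14, B87, b₂, ha, hb, hm, hn]
    linarith

lemma root3 : IsRootL14 b₃ := by
  refine isRootL14_of _ ⟨?_, ⟨1, rfl⟩, ⟨1, rfl⟩⟩ (by norm_num [BL14, B87, b₃]) ?_ ?_
  · rw [mem_E87_iff]; exact ⟨0, 0, by norm_num [b₃], by norm_num [b₃], rfl, rfl⟩
  · intro k w hw h
    obtain ⟨c, hc⟩ := hw.2.1
    have e1 : b₃.2.1 = (k:ℚ) * w.2.1 := by rw [h]; rfl
    rw [hc] at e1
    have : k * c = 1 := by
      have : (k:ℚ) * c = 1 := by simp only [b₃] at e1; linarith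
      exact_mod_cast this
    exact prim_of_unit this
  · rintro x ⟨hx1, ⟨m, hm⟩, ⟨n, hn⟩⟩
    obtain ⟨a, b, ha, hb, h1, h2⟩ := (mem_E87_iff x.1).mp hx1
    refine ⟨m + n, ?_⟩
    have key : ((m + n : ℤ) : ℚ) = (m:ℚ) + n := by push_cast; ring
    simp only [BL14, B87, b₃, ha, hb, hm, hn]
    linarith

lemma root4 : IsRootL14 b₄ := by
  refine isRootL14_of _ ⟨?_, ⟨0, rfl⟩, ⟨-1, by norm_num [b₄]⟩⟩ (by norm_num [BL14, B87, b₄]) ?_ ?_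
  · rw [mem_E87_iff]; exact ⟨-1, -1, by norm_num [b₄], by norm_num [b₄], rfl, rfl⟩
  · intro k w hw h
    obtain ⟨d, hd⟩ := hw.2.2
    have e1 : b₄.2.2 = (k:ℚ) * w.2.2 := by rw [h]; rfl
    rw [hd] at e1
    have hkd : k * d = -1 := by
      have : (k:ℚ) * d = -1 := by simp only [b₄] at e1; linarith
      exact_mod_cast this
    exact prim_of_unit (show k * (-d) = 1 by rw [mul_neg, hkd]; ring)
  · rintro x ⟨hx1, ⟨m, hm⟩, ⟨n, hn⟩⟩
    obtain ⟨a, b, ha, hb, h1, h2⟩ := (mem_E87_iff x.1).mp hx1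
    refine ⟨-((a + 7*b)/4) - m, ?_⟩
    have key : (a:ℚ) + 7*b = 4 * (((a + 7*b)/4 : ℤ) : ℚ) := by
      exact_mod_cast (show a + 7*b = 4 * ((a + 7*b)/4) by omega)
    simp only [BL14, B87, b₄, ha, hb, hm, hn]
    push_cast
    linarith

lemma root5 : IsRootL14 b₅ := by
  refine isRootL14_of _ ⟨?_, ⟨1, rfl⟩, ⟨-1, by norm_num [b₅]⟩⟩ (by norm_num [BL14, B87, b₅]) ?_ ?_
  · rw [mem_E87_iff]; exact ⟨-4, 0, by norm_num [b₅], by norm_num [b₅], by decide, by decide⟩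
  · intro k w hw h
    obtain ⟨c, hc⟩ := hw.2.1
    have e1 : b₅.2.1 = (k:ℚ) * w.2.1 := by rw [h]; rfl
    rw [hc] at e1
    have : k * c = 1 := by
      have : (k:ℚ) * c = 1 := by simp only [b₅] at e1; linarith
      exact_mod_cast this
    exact prim_of_unit this
  · rintro x ⟨hx1, ⟨m, hm⟩, ⟨n, hn⟩⟩
    obtain ⟨a, b, ha, hb, h1, h2⟩ := (mem_E87_iff x.1).mp hx1
    refine ⟨-a - m + n, ?_⟩
    simp only [BL14, B87, b₅, ha, hb, hm, hn]
    push_cast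
    linarith

lemma root6 : IsRootL14 b₆ := by
  refine isRootL14_of _ ⟨?_, ⟨0, rfl⟩, ⟨-7, by norm_num [b₆]⟩⟩ (by norm_num [BL14, B87, b₆]) ?_ ?_
  · rw [mem_E87_iff]; exact ⟨-7, 1, by norm_num [b₆], by norm_num [b₆], by decide, by decide⟩
  · intro k w hw h
    obtain ⟨a, b, ha, hb, h1, h2⟩ := (mem_E87_iff w.1).mp hw.1
    have e1 : b₆.1.2 = (k:ℚ) * w.1.2 := by rw [h]; rfl
    rw [hb] at e1
    have : k * b = 1 := by
      have : (k:ℚ) * b = 1 := by simp only [b₆] at e1; field_simp at e1; linarith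
      exact_mod_cast this
    exact prim_of_unit this
  · rintro x ⟨hx1, ⟨m, hm⟩, ⟨n, hn⟩⟩
    obtain ⟨a, b, ha, hb, h1, h2⟩ := (mem_E87_iff x.1).mp hx1
    refine ⟨-((a - b)/4) - m, ?_⟩
    have key : (a:ℚ) - b = 4 * (((a - b)/4 : ℤ) : ℚ) := by
      exact_mod_cast (show a - b = 4 * ((a - b)/4) by omega)
    simp only [BL14, B87, b₆, ha, hb, hm, hn]
    push_cast
    linarith

/-- The six given vectors are roots of `L = E₈⁷(-1) ⊕ II_{1,1}`, with `α₂, α₆` of norm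
`-14` and the rest of norm `-2`; each satisfies `(ρ,αᵢ) = αᵢ²/2` for `ρ = ((2,0),-2,3)`,
and `ρ² = 8`. -/
theorem stmt14 :
    IsRootL14 b₁ ∧ IsRootL14 b₂ ∧ IsRootL14 b₃ ∧ IsRootL14 b₄ ∧ IsRootL14 b₅ ∧
    IsRootL14 b₆ ∧
    BL14 b₂ b₂ = -14 ∧ BL14 b₆ b₆ = -14 ∧
    BL14 b₁ b₁ = -2 ∧ BL14 b₃ b₃ = -2 ∧ BL14 b₄ b₄ = -2 ∧ BL14 b₅ b₅ = -2 ∧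
    BL14 ρ14 b₁ = BL14 b₁ b₁ / 2 ∧ BL14 ρ14 b₂ = BL14 b₂ b₂ / 2 ∧
    BL14 ρ14 b₃ = BL14 b₃ b₃ / 2 ∧ BL14 ρ14 b₄ = BL14 b₄ b₄ / 2 ∧
    BL14 ρ14 b₅ = BL14 b₅ b₅ / 2 ∧ BL14 ρ14 b₆ = BL14 b₆ b₆ / 2 ∧
    BL14 ρ14 ρ14 = 8 := by
  refine ⟨root1, root2, root3, root4, root5, root6, ?_, ?_, ?_, ?_, ?_, ?_, ?_, ?_, ?_, ?_, ?_, ?_, ?_⟩ <;>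
    norm_num [BL14, B87, b₁, b₂, b₃, b₄, b₅, b₆, ρ14]
end
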